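/- For every x, y ∈ ℝ^d, letting p be the minimizer of u ↦ γ g(u) + (1/2)‖u − y‖² (i.e. p = prox_{γg}(y)) and x* a minimizer of F = f + g, the following inequality holds: −2γ( F(p) − F(x*) ) ≥ ‖p − x*‖² + 2⟨ p − x*, x − γ∇f(x) − y ⟩ − ‖x* − x‖². -/
import Mathlib


open scoped RealInnerProductSpace

/-- the proximal descent lemma. If `p = prox_{γ g}(y)` (i.e. `p` minimizes
`u ↦ γ g(u) + ½‖u − y‖²`) and `x*` is a minimizer of `F = f + g`, then for every `x, y`:
`−2γ(F(p) − F(x*)) ≥ ‖p − x*‖² + 2⟨p − x*, x − γ∇f(x) − y⟩ − ‖x* − x‖²`. -/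
theorem stmt_19 {d : ℕ}
    (f g : EuclideanSpace ℝ (Fin d) → ℝ)
    (f' : EuclideanSpace ℝ (Fin d) → EuclideanSpace ℝ (Fin d)) (L γ : ℝ)
    (hL : 0 < L) (hγ : 0 < γ) (hγL : γ ≤ 1 / L)
    (hsmooth : ∀ x y, f y ≤ f x + ⟪f' x, y - x⟫ + L / 2 * ‖y - x‖ ^ 2)
    (hconvf : ∀ x y, f x + ⟪f' x, y - x⟫ ≤ f y)
    (hconvg : ConvexOn ℝ Set.univ g)
    (xstar : EuclideanSpace ℝ (Fin d))
    (hmin : ∀ y, f xstar + g xstar ≤ f y + g y)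
    (x y p : EuclideanSpace ℝ (Fin d))
    (hp : ∀ u, γ * g p + ‖p - y‖ ^ 2 / 2 ≤ γ * g u + ‖u - y‖ ^ 2 / 2) :
    ‖p - xstar‖ ^ 2 + 2 * ⟪p - xstar, x - γ • f' x - y⟫ - ‖xstar - x‖ ^ 2
      ≤ -(2 * γ) * ((f p + g p) - (f xstar + g xstar)) := by
  -- subgradient inequality for g at p (with u = xstar)
  have hstep : ∀ t : ℝ, 0 < t → t ≤ 1 →
      0 ≤ γ * (g xstar - g p) + ⟪p - y, xstar - p⟫ + t * (‖xstar - p‖ ^ 2 / 2) := by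
    intro t ht ht1
    have h := hp (p + t • (xstar - p))
    have hcvx : g (p + t • (xstar - p)) ≤ (1 - t) * g p + t * g xstar := by
      have := hconvg.2 (Set.mem_univ p) (Set.mem_univ xstar)
        (by linarith : (0:ℝ) ≤ 1 - t) (le_of_lt ht) (by ring)
      have heq : (1 - t) • p + t • xstar = p + t • (xstar - p) := by
        module
      rw [heq] at this
      simpa using this
    have hnorm : ‖p + t • (xstar - p) - y‖ ^ 2
        = ‖p - y‖ ^ 2 + 2 * t * ⟪p - y, xstar - p⟫ + t ^ 2 * ‖xstar - p‖ ^ 2 := by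
      have : p + t • (xstar - p) - y = (p - y) + t • (xstar - p) := by abel
      rw [this, norm_add_sq_real, real_inner_smul_right, norm_smul]
      simp [mul_pow, abs_of_pos ht]
      ring
    rw [hnorm] at h
    have key : 0 ≤ t * (γ * (g xstar - g p) + ⟪p - y, xstar - p⟫ + t * (‖xstar - p‖ ^ 2 / 2)) := by
      nlinarith [h, hcvx, hγ.le]
    exact nonneg_of_mul_nonneg_right key ht
  have hsub : γ * (g p - g xstar) ≤ ⟪y - p, p - xstar⟫ := by
    have hA : 0 ≤ γ * (g xstar - g p) + ⟪p - y, xstar - p⟫ := by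
      by_contra hc
      push_neg at hc
      set A := γ * (g xstar - g p) + ⟪p - y, xstar - p⟫ with hAdef
      set c := ‖xstar - p‖ ^ 2 / 2 with hcdef
      have hc0 : 0 ≤ c := by positivity
      have ht : (0:ℝ) < min 1 ((-A) / (c + 1)) := by
        apply lt_min one_pos
        apply div_pos (by linarith) (by linarith)
      have := hstep (min 1 ((-A) / (c + 1))) ht (min_le_left _ _)
      have htle : min 1 ((-A) / (c + 1)) ≤ (-A) / (c + 1) := min_le_right _ _
      have hdiv : (-A) / (c + 1) * c < -A := by
        rw [div_mul_eq_mul_div, div_lt_iff₀ (by linarith)]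
        nlinarith
      nlinarith [mul_le_mul_of_nonneg_right htle hc0]
    have hii : ⟪p - y, xstar - p⟫ = ⟪y - p, p - xstar⟫ := by
      rw [show p - y = -(y - p) by abel, show xstar - p = -(p - xstar) by abel,
        inner_neg_neg]
    rw [hii] at hA
    linarith
  -- main inequality
  have hs := hsmooth x p
  have hc := hconvf x xstar
  have hγL' : γ * L ≤ 1 := by
    rw [← le_div_iff₀ hL] at *
    exact hγL
  -- inner product identities
  have hi1 : ⟪p - xstar, x - γ • f' x - y⟫
      = ⟪p - xstar, x - y⟫ - γ * ⟪p - xstar, f' x⟫ := by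
    have : x - γ • f' x - y = (x - y) - γ • f' x := by abel
    rw [this, inner_sub_right, real_inner_smul_right]
  have hi2 : ⟪f' x, p - x⟫ - ⟪f' x, xstar - x⟫ = ⟪f' x, p - xstar⟫ := by
    rw [← inner_sub_right]
    congr 1
    abel
  have hi3 : ⟪p - xstar, f' x⟫ = ⟪f' x, p - xstar⟫ := real_inner_comm _ _
  have hi4 : ⟪p - xstar, x - y⟫ + ⟪y - p, p - xstar⟫ = ⟪p - xstar, x - p⟫ := by
    rw [show (⟪y - p, p - xstar⟫:ℝ) = ⟪p - xstar, y - p⟫ from real_inner_comm _ _,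
      ← inner_add_right]
    congr 1
    abel
  have hid : 2 * ⟪p - xstar, p - x⟫ = ‖p - xstar‖ ^ 2 + ‖p - x‖ ^ 2 - ‖xstar - x‖ ^ 2 := by
    have h1 : xstar - x = (p - x) - (p - xstar) := by abel
    have h2 := norm_sub_sq_real (p - x) (p - xstar)
    rw [← h1] at h2
    rw [h2, real_inner_comm (p - x) (p - xstar)]
    ring
  have hi5 : ⟪p - xstar, x - p⟫ = -⟪p - xstar, p - x⟫ := by
    rw [← inner_neg_right]
    congr 1
    abel
  have hfin : 2 * γ * (f p - f xstar) ≤ 2 * γ * (⟪f' x, p - xstar⟫ + L / 2 * ‖p - x‖ ^ 2) := by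
    have : f p - f xstar ≤ ⟪f' x, p - xstar⟫ + L / 2 * ‖p - x‖ ^ 2 := by
      rw [← hi2]; linarith
    nlinarith [hγ.le]
  have hLn : 0 ≤ (1 - γ * L) * ‖p - x‖ ^ 2 := by
    have : (0:ℝ) ≤ ‖p - x‖ ^ 2 := by positivity
    nlinarith
  have hi3' : γ * ⟪p - xstar, f' x⟫ = γ * ⟪f' x, p - xstar⟫ := by rw [hi3]
  rw [hi1]
  linarith [hsub, hfin, hid, hi3', hi4, hi5, hLn]
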